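/- For m > 0 and φ(θ) = -m cos θ, b_φ(e) ~ π m √2 / √e as e → +∞, where b_φ(e) = 2√2 ∫₀^{2π} cos θ √((e + m cos θ)₊) dθ. -/

import Mathlib

open Real Set Filter

/-- b_φ(e) = 2√2 ∫₀^{2π} cos θ √((e + m cos θ)₊) dθ for φ(θ) = -m cos θ. -/
noncomputable def bphi (m e : ℝ) : ℝ :=
  2 * Real.sqrt 2 * ∫ θ in (0:ℝ)..(2 * π), Real.cos θ * Real.sqrt (max (e + m * Real.cos θ) 0)

open MeasureTheory

/-- auxiliary: √e/(√(e+c)+√e) → 1/2 -/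
lemma half_limit_aux (c : ℝ) :
    Tendsto (fun e : ℝ => Real.sqrt e / (Real.sqrt (e + c) + Real.sqrt e)) atTop
      (nhds (1/2)) := by
  have h1 : Tendsto (fun e : ℝ => c / e) atTop (nhds 0) := by
    simpa [div_eq_mul_inv] using tendsto_inv_atTop_zero.const_mul c
  have hg : ContinuousAt (fun x : ℝ => 1 / (Real.sqrt (1 + x) + 1)) 0 := by
    apply ContinuousAt.div continuousAt_const
    · exact ((Real.continuous_sqrt.comp (continuous_const.add continuous_id)).continuousAt).add
        continuousAt_const
    · norm_num
  have h2' : Tendsto (fun e : ℝ => 1 / (Real.sqrt (1 + c / e) + 1)) atTop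
      (nhds (1 / (Real.sqrt (1 + 0) + 1))) := hg.tendsto.comp h1
  norm_num at h2'
  apply h2'.congr'
  filter_upwards [eventually_ge_atTop (max |c| 1)] with e he
  have he1 : (1:ℝ) ≤ e := le_trans (le_max_right _ _) he
  have hec : 0 ≤ e + c := by
    have := le_trans (le_max_left _ _) he
    have := neg_abs_le c
    linarith
  have he0 : (0:ℝ) < e := by linarith
  have hse : Real.sqrt e ≠ 0 := by positivity
  have h3 : 1 + c / e = (e + c) / e := by field_simp
  rw [h3, Real.sqrt_div hec e]
  have hD : 0 < Real.sqrt (e + c) + Real.sqrt e := by positivity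
  field_simp

/-- pointwise algebra -/
lemma alg_aux (e c t : ℝ) (he : 0 < e) (hec : 0 ≤ e + c * t) :
    Real.sqrt e * (t * (Real.sqrt (e + c * t) - Real.sqrt e))
      = c * t ^ 2 * (Real.sqrt e / (Real.sqrt (e + c * t) + Real.sqrt e)) := by
  have hs2 : Real.sqrt (e + c * t) ^ 2 = e + c * t := Real.sq_sqrt hec
  have ht2 : Real.sqrt e ^ 2 = e := Real.sq_sqrt he.le
  have hD : 0 < Real.sqrt (e + c * t) + Real.sqrt e := by positivity
  rw [mul_div_assoc', eq_div_iff hD.ne']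
  linear_combination Real.sqrt e * t * hs2 - Real.sqrt e * t * ht2

lemma main_limit (m : ℝ) (hm : 0 < m) :
    Tendsto (fun e : ℝ => Real.sqrt e *
        ∫ θ in (0:ℝ)..(2 * π), Real.cos θ * Real.sqrt (max (e + m * Real.cos θ) 0))
      atTop (nhds (m * π / 2)) := by
  set F : ℝ → ℝ → ℝ := fun e θ =>
    m * Real.cos θ ^ 2 * (Real.sqrt e / (Real.sqrt (e + m * Real.cos θ) + Real.sqrt e)) with hF
  have hDCT : Tendsto (fun e : ℝ => ∫ θ in Ioc (0:ℝ) (2*π), F e θ) atTop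
      (nhds (∫ θ in Ioc (0:ℝ) (2*π), m * Real.cos θ ^ 2 / 2)) := by
    apply MeasureTheory.tendsto_integral_filter_of_dominated_convergence (bound := fun _ => m)
    · filter_upwards [eventually_ge_atTop (1:ℝ)] with e he
      have hcont : Continuous (F e) := by
        apply Continuous.mul (by continuity)
        apply Continuous.div continuous_const
        · exact (Real.continuous_sqrt.comp (by continuity)).add continuous_const
        · intro θ
          have h1 : 0 < Real.sqrt e := Real.sqrt_pos.2 (by linarith)
          positivity
      exact hcont.aestronglyMeasurable
    · filter_upwards [eventually_ge_atTop (max m 1)] with e he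
      apply Eventually.of_forall
      intro θ
      have he1 : (1:ℝ) ≤ e := le_trans (le_max_right _ _) he
      have hem : m ≤ e := le_trans (le_max_left _ _) he
      have hec : 0 ≤ e + m * Real.cos θ := by
        nlinarith [Real.neg_one_le_cos θ]
      have hse : 0 < Real.sqrt e := Real.sqrt_pos.2 (by linarith)
      have hD : Real.sqrt e ≤ Real.sqrt (e + m * Real.cos θ) + Real.sqrt e := by
        have := Real.sqrt_nonneg (e + m * Real.cos θ); linarith
      have hdiv : Real.sqrt e / (Real.sqrt (e + m * Real.cos θ) + Real.sqrt e) ≤ 1 :=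
        div_le_one_of_le₀ hD (by linarith)
      have hdiv0 : 0 ≤ Real.sqrt e / (Real.sqrt (e + m * Real.cos θ) + Real.sqrt e) := by
        positivity
      have hc2 : Real.cos θ ^ 2 ≤ 1 := Real.cos_sq_le_one θ
      have hFnn : 0 ≤ F e θ := by positivity
      rw [Real.norm_eq_abs, abs_of_nonneg hFnn]
      have hc2' : 0 ≤ Real.cos θ ^ 2 := sq_nonneg _
      calc F e θ ≤ m * Real.cos θ ^ 2 * 1 := by
            apply mul_le_mul_of_nonneg_left hdiv (by positivity)
        _ ≤ m := by nlinarith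
    · exact MeasureTheory.integrableOn_const measure_Ioc_lt_top.ne
    · apply Eventually.of_forall
      intro θ
      have := (half_limit_aux (m * Real.cos θ)).const_mul (m * Real.cos θ ^ 2)
      have heq : m * Real.cos θ ^ 2 * (1/2) = m * Real.cos θ ^ 2 / 2 := by ring
      rw [heq] at this
      exact this
  have hval : (∫ θ in Ioc (0:ℝ) (2*π), m * Real.cos θ ^ 2 / 2) = m * π / 2 := by
    rw [← intervalIntegral.integral_of_le (by positivity)]
    rw [intervalIntegral.integral_div, intervalIntegral.integral_const_mul, integral_cos_sq]
    simp [Real.sin_two_pi]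
  rw [hval] at hDCT
  apply hDCT.congr'
  filter_upwards [eventually_ge_atTop (max m 1)] with e he
  have he1 : (1:ℝ) ≤ e := le_trans (le_max_right _ _) he
  have hem : m ≤ e := le_trans (le_max_left _ _) he
  have he0 : (0:ℝ) < e := by linarith
  have hec : ∀ θ : ℝ, 0 ≤ e + m * Real.cos θ := fun θ => by
    nlinarith [Real.neg_one_le_cos θ]
  -- step A: drop the max
  have hA : (∫ θ in (0:ℝ)..(2 * π), Real.cos θ * Real.sqrt (max (e + m * Real.cos θ) 0))
      = ∫ θ in (0:ℝ)..(2 * π), Real.cos θ * Real.sqrt (e + m * Real.cos θ) := by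
    apply intervalIntegral.integral_congr
    intro θ _
    simp [max_eq_left (hec θ)]
  -- step B: subtract the zero integral of cos θ * √e
  have hi1 : IntervalIntegrable (fun θ : ℝ => Real.cos θ * Real.sqrt (e + m * Real.cos θ))
      MeasureTheory.volume 0 (2*π) := by
    apply Continuous.intervalIntegrable
    exact Real.continuous_cos.mul (Real.continuous_sqrt.comp (by continuity))
  have hi2 : IntervalIntegrable (fun θ : ℝ => Real.cos θ * Real.sqrt e)
      MeasureTheory.volume 0 (2*π) := by
    apply Continuous.intervalIntegrable; continuity
  have hB0 : (∫ θ in (0:ℝ)..(2 * π), Real.cos θ * Real.sqrt e) = 0 := by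
    rw [intervalIntegral.integral_mul_const, integral_cos]
    simp [Real.sin_two_pi]
  have hB : (∫ θ in (0:ℝ)..(2 * π), Real.cos θ * Real.sqrt (e + m * Real.cos θ))
      = ∫ θ in (0:ℝ)..(2 * π),
          Real.cos θ * (Real.sqrt (e + m * Real.cos θ) - Real.sqrt e) := by
    rw [show (fun θ : ℝ => Real.cos θ * (Real.sqrt (e + m * Real.cos θ) - Real.sqrt e))
        = fun θ : ℝ => Real.cos θ * Real.sqrt (e + m * Real.cos θ) - Real.cos θ * Real.sqrt e
        from funext fun θ => by ring]
    rw [intervalIntegral.integral_sub hi1 hi2, hB0, sub_zero]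
  rw [hA, hB, ← intervalIntegral.integral_const_mul]
  have hC : (∫ θ in (0:ℝ)..(2 * π),
        Real.sqrt e * (Real.cos θ * (Real.sqrt (e + m * Real.cos θ) - Real.sqrt e)))
      = ∫ θ in (0:ℝ)..(2 * π), F e θ := by
    apply intervalIntegral.integral_congr
    intro θ _
    have := alg_aux e m (Real.cos θ) he0 (hec θ)
    simpa [hF, mul_comm, mul_left_comm, mul_assoc] using this
  rw [hC, intervalIntegral.integral_of_le (by positivity)]

/-- b_φ(e) ~ πm√2/√e as e → +∞. -/
theorem bphi_asymptotics (m : ℝ) (hm : 0 < m) :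
    Tendsto (fun e : ℝ => bphi m e / (π * m * Real.sqrt 2 / Real.sqrt e))
      atTop (nhds 1) := by
  have lim := (main_limit m hm).const_mul (2 * Real.sqrt 2 / (π * m * Real.sqrt 2))
  have h2 : Real.sqrt 2 ≠ 0 := by positivity
  have hpm : π * m ≠ 0 := by positivity
  have hone : 2 * Real.sqrt 2 / (π * m * Real.sqrt 2) * (m * π / 2) = 1 := by
    field_simp
  rw [hone] at lim
  apply lim.congr'
  filter_upwards [eventually_ge_atTop (1:ℝ)] with e he
  have h0 : (0:ℝ) < e := by linarith
  have hse : Real.sqrt e ≠ 0 := by positivity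
  unfold bphi
  field_simp
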